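/- Let t ≥ 3 and let F be a finite set of finite simple graphs such that F contains a graph isomorphic to the complete graph K_t, and such that for every H ∈ F and every set Y of at most one vertex of H, the graph H − Y contains a clique of size t − 1 (i.e., no graph in F can be made K_{t−1}-free with fewer than two vertex deletions). Let G = (V, E) be a finite simple graph, let k ∈ ℕ, and let B be the set of blockers of Φ(G). Then there exists X ⊆ V with |X| ≤ k such that G − X is F-free, if and only if there exists a set X′ of vertices of Φ(G) with |X′| ≤ k + |B| such that Φ(G) − X′ is F-free. -/

import Mathlib

/-- The blockers of `Φ(G)`: one new vertex for each unordered pair of distinct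
non-adjacent vertices of `G`. -/
def Blocker {V : Type} (G : SimpleGraph V) : Type :=
  {e : Sym2 V // ¬ e.IsDiag ∧ e ∉ G.edgeSet}

/-- The transformation `Φ`: the graph on `V ⊕ B` containing all edges of `G`,
in which every blocker is adjacent to all other vertices. -/
def Phi {V : Type} (G : SimpleGraph V) : SimpleGraph (V ⊕ Blocker G) :=
  SimpleGraph.fromRel (fun x y =>
    match x, y with
    | Sum.inl u, Sum.inl v => G.Adj u v
    | _, _ => True)

namespace Stmt12Aux

variable {V : Type} {G : SimpleGraph V}

lemma blocker_finite [Fintype V] (G : SimpleGraph V) : Finite (Blocker G) := by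
  unfold Blocker; infer_instance

lemma phi_adj_inl {u v : V} : (Phi G).Adj (Sum.inl u) (Sum.inl v) ↔ G.Adj u v := by
  constructor
  · rintro ⟨hne, h | h⟩
    · exact h
    · exact h.symm
  · intro h
    exact ⟨by simpa using h.ne, Or.inl h⟩

lemma phi_adj_inr (b : Blocker G) (x : V ⊕ Blocker G) (h : Sum.inr b ≠ x) :
    (Phi G).Adj (Sum.inr b) x := by
  cases x <;> exact ⟨h, Or.inl trivial⟩

/-- Copy `G - X` into `Φ(G) - X'` via `inl`. -/
def embInl (X : Set V) (X' : Set (V ⊕ Blocker G))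
    (h : ∀ v, v ∉ X → Sum.inl v ∉ X') :
    G.induce Xᶜ ↪g (Phi G).induce X'ᶜ :=
  ⟨⟨fun x => ⟨Sum.inl x.1, h x.1 x.2⟩,
    fun a a' hh => Subtype.ext (Sum.inl_injective (congrArg Subtype.val hh))⟩,
    phi_adj_inl⟩

/-- If every vertex of `s` is `inl` of a vertex outside `X`, then `Φ(G)`
induced on `s` embeds into `G - X`. -/
noncomputable def embBack (X : Set V) (s : Set (V ⊕ Blocker G))
    (hs : ∀ x ∈ s, ∃ v, v ∉ X ∧ x = Sum.inl v) :
    (Phi G).induce s ↪g G.induce Xᶜ :=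
  ⟨⟨fun x => ⟨(hs x.1 x.2).choose, (hs x.1 x.2).choose_spec.1⟩,
    by
      intro a b hab
      have ha := (hs a.1 a.2).choose_spec.2
      have hb := (hs b.1 b.2).choose_spec.2
      have hv : ((hs a.1 a.2).choose : V) = (hs b.1 b.2).choose :=
        Subtype.ext_iff.mp hab
      apply Subtype.ext
      rw [ha, hb, hv]⟩,
    by
      intro a b
      have ha := (hs a.1 a.2).choose_spec.2
      have hb := (hs b.1 b.2).choose_spec.2
      change G.Adj _ _ ↔ (Phi G).Adj a.1 b.1
      rw [ha, hb]
      exact phi_adj_inl.symm⟩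

/-- The key swap lemma: moving a blocker into the deleted set in exchange for
an original vertex preserves `F`-freeness. -/
lemma swap {ι : Type} {t : ℕ}
    {nF : ι → ℕ} {F : ∀ i, SimpleGraph (Fin (nF i))}
    (hKt : ∃ i, Nonempty ((F i) ≃g SimpleGraph.completeGraph (Fin t)))
    (hdel : ∀ i (Y : Set (Fin (nF i))), Y.ncard ≤ 1 →
      ¬ ((F i).induce Yᶜ).CliqueFree (t - 1))
    {X' : Set (V ⊕ Blocker G)}
    {b : Blocker G} (hb : Sum.inr b ∉ X') {v : V} (_hv : Sum.inl v ∈ X')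
    (hfree : ∀ i, ¬ Nonempty ((F i) ↪g (Phi G).induce X'ᶜ))
    (i : ι) :
    ¬ Nonempty ((F i) ↪g
      (Phi G).induce (insert (Sum.inr b) (X' \ {Sum.inl v}))ᶜ) := by
  rintro ⟨e⟩
  set X'' := insert (Sum.inr b) (X' \ {Sum.inl v}) with hX''
  have hmem : ∀ x, x ∈ X''ᶜ → x ≠ Sum.inl v → x ∈ X'ᶜ := by
    intro x hx hne hx'
    exact hx (Set.mem_insert_iff.mpr (Or.inr ⟨hx', by simpa using hne⟩))
  by_cases hcase : ∃ a, (e a).1 = Sum.inl v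
  · obtain ⟨a0, ha0⟩ := hcase
    obtain ⟨i0, ⟨φ⟩⟩ := hKt
    have h1 := hdel i {a0} (by simp)
    rw [SimpleGraph.cliqueFree_iff, not_isEmpty_iff] at h1
    obtain ⟨c⟩ := h1
    have hkey : ∀ m : Fin (t - 1), ((e (c m).1).1 : V ⊕ Blocker G) ≠ Sum.inl v := by
      intro m h
      have h2 : (e (c m).1) = e a0 := Subtype.ext (h.trans ha0.symm)
      have h3 : ((c m).1 : Fin (nF i)) = a0 := e.injective h2
      exact (c m).2 (by simp [h3])
    have hmem' : ∀ m : Fin (t - 1), ((e (c m).1).1 : V ⊕ Blocker G) ∈ X'ᶜ :=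
      fun m => hmem _ (e (c m).1).2 (hkey m)
    have hneb : ∀ m : Fin (t - 1), ((e (c m).1).1 : V ⊕ Blocker G) ≠ Sum.inr b := by
      intro m h
      exact (e (c m).1).2 (by rw [h]; exact Set.mem_insert _ _)
    -- build an embedding of `K_t` into `Φ(G) - X'`
    let f : Fin t → (X'ᶜ : Set (V ⊕ Blocker G)) := fun j =>
      if h : (j : ℕ) < t - 1 then ⟨(e (c ⟨j, h⟩).1).1, hmem' _⟩ else ⟨Sum.inr b, hb⟩
    have hfval : ∀ (j : Fin t) (h : (j : ℕ) < t - 1),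
        (f j).1 = (e (c ⟨j, h⟩).1).1 := by
      intro j h; simp only [f, dif_pos h]
    have hfval' : ∀ (j : Fin t), ¬ (j : ℕ) < t - 1 → (f j).1 = Sum.inr b := by
      intro j h; simp only [f, dif_neg h]
    have hinj : Function.Injective f := by
      intro j j' hjj'
      have hv1 := congrArg Subtype.val hjj'
      by_cases h : (j : ℕ) < t - 1 <;> by_cases h' : (j' : ℕ) < t - 1
      · rw [hfval j h, hfval j' h'] at hv1
        have := c.injective (Subtype.ext (e.injective (Subtype.ext hv1)))
        have := congrArg Fin.val this
        exact Fin.ext (by simpa using this)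
      · rw [hfval j h, hfval' j' h'] at hv1
        exact absurd hv1 (hneb _)
      · rw [hfval' j h, hfval j' h'] at hv1
        exact absurd hv1.symm (hneb _)
      · have := j.2; have := j'.2
        exact Fin.ext (by omega)
    have hadj : ∀ j j' : Fin t, j ≠ j' →
        (Phi G).Adj (f j).1 (f j').1 := by
      intro j j' hne
      by_cases h : (j : ℕ) < t - 1 <;> by_cases h' : (j' : ℕ) < t - 1
      · rw [hfval j h, hfval j' h']
        have hmm : (⟨(j : ℕ), h⟩ : Fin (t - 1)) ≠ ⟨(j' : ℕ), h'⟩ := by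
          intro hh
          exact hne (Fin.ext (by simpa using congrArg Fin.val hh))
        have h4 : ((F i).induce ({a0}ᶜ : Set (Fin (nF i)))).Adj
            (c ⟨(j : ℕ), h⟩) (c ⟨(j' : ℕ), h'⟩) := c.toHom.map_adj hmm
        exact e.map_rel_iff.mpr h4
      · rw [hfval j h, hfval' j' h']
        exact ((phi_adj_inr b _ (Ne.symm (hneb _)))).symm
      · rw [hfval' j h, hfval j' h']
        exact phi_adj_inr b _ (Ne.symm (hneb _))
      · have := j.2; have := j'.2
        exact absurd (Fin.ext (by omega) : j = j') hne
    let emb : SimpleGraph.completeGraph (Fin t) ↪g (Phi G).induce X'ᶜ :=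
      ⟨⟨f, hinj⟩, by
        intro j j'
        constructor
        · intro h
          intro hjj'
          subst hjj'
          exact ((Phi G).induce X'ᶜ).irrefl h
        · intro h
          exact hadj j j' h⟩
    exact hfree i0 ⟨(φ.toRelEmbedding).trans emb⟩
  · push_neg at hcase
    refine hfree i ⟨⟨⟨fun a => ⟨(e a).1, hmem _ (e a).2 (hcase a)⟩, ?_⟩,
      e.map_rel_iff⟩⟩
    intro a a' hh
    simp only [Subtype.mk.injEq] at hh
    exact e.injective (Subtype.ext hh)

end Stmt12Aux

open Stmt12Aux in
theorem stmt_12 {V ι : Type} [Fintype V] [Fintype ι]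
    (t : ℕ) (ht : 3 ≤ t)
    -- the finite family `F` of finite graphs
    (nF : ι → ℕ) (F : ∀ i, SimpleGraph (Fin (nF i)))
    -- `F` contains a graph isomorphic to `K_t`
    (hKt : ∃ i, Nonempty ((F i) ≃g SimpleGraph.completeGraph (Fin t)))
    -- no graph in `F` can be made `K_{t−1}`-free with fewer than two deletions:
    -- after deleting at most one vertex, a clique of size `t − 1` remains
    (hdel : ∀ i (Y : Set (Fin (nF i))), Y.ncard ≤ 1 →
      ¬ ((F i).induce Yᶜ).CliqueFree (t - 1))
    (G : SimpleGraph V) (k : ℕ) :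
    (∃ X : Set V, X.ncard ≤ k ∧
        ∀ i, ¬ Nonempty ((F i) ↪g G.induce Xᶜ)) ↔
      (∃ X' : Set (V ⊕ Blocker G), X'.ncard ≤ k + Nat.card (Blocker G) ∧
        ∀ i, ¬ Nonempty ((F i) ↪g (Phi G).induce X'ᶜ)) := by
  haveI : Finite (Blocker G) := blocker_finite G
  haveI : Finite (V ⊕ Blocker G) := by infer_instance
  have hncr : (Set.range (Sum.inr : Blocker G → V ⊕ Blocker G)).ncard
      = Nat.card (Blocker G) := by
    rw [← Set.image_univ, Set.ncard_image_of_injective _ Sum.inr_injective,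
      Set.ncard_univ]
  constructor
  · rintro ⟨X, hX, hfree⟩
    refine ⟨Sum.inl '' X ∪ Set.range Sum.inr, ?_, ?_⟩
    · calc (Sum.inl '' X ∪ Set.range Sum.inr).ncard
          ≤ (Sum.inl '' X).ncard + (Set.range (Sum.inr : Blocker G → _)).ncard :=
            Set.ncard_union_le _ _
        _ ≤ k + Nat.card (Blocker G) := by
            rw [Set.ncard_image_of_injective _ Sum.inl_injective, hncr]
            omega
    · rintro i ⟨e⟩
      refine hfree i ⟨e.trans (embBack X _ ?_)⟩
      rintro (x | x) hx
      · refine ⟨x, fun hxX => hx (Or.inl ⟨x, hxX, rfl⟩), rfl⟩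
      · exact absurd (Or.inr ⟨x, rfl⟩) hx
  · rintro ⟨X', hX', hfree⟩
    suffices h : ∀ n (X' : Set (V ⊕ Blocker G)),
        (X' ∩ Set.range Sum.inl).ncard ≤ n →
        X'.ncard ≤ k + Nat.card (Blocker G) →
        (∀ i, ¬ Nonempty ((F i) ↪g (Phi G).induce X'ᶜ)) →
        ∃ X : Set V, X.ncard ≤ k ∧ ∀ i, ¬ Nonempty ((F i) ↪g G.induce Xᶜ) by
      exact h _ X' le_rfl hX' hfree
    clear hX' hfree X'
    intro n
    induction n with
    | zero =>
      intro X' hn hcard hfree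
      refine ⟨Sum.inl ⁻¹' X', ?_, ?_⟩
      · have h1 : Sum.inl '' (Sum.inl ⁻¹' X') = X' ∩ Set.range Sum.inl :=
          Set.image_preimage_eq_inter_range
        have h2 : (Sum.inl ⁻¹' X').ncard = (X' ∩ Set.range Sum.inl).ncard := by
          rw [← h1, Set.ncard_image_of_injective _ Sum.inl_injective]
        omega
      · rintro i ⟨e⟩
        exact hfree i ⟨e.trans (embInl _ X' (fun v hv => hv))⟩
    | succ n ih =>
      intro X' hn hcard hfree
      by_cases hB : Set.range (Sum.inr : Blocker G → V ⊕ Blocker G) ⊆ X'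
      · -- all blockers are deleted
        refine ⟨Sum.inl ⁻¹' X', ?_, ?_⟩
        · have h1 : Sum.inl '' (Sum.inl ⁻¹' X') = X' ∩ Set.range Sum.inl :=
            Set.image_preimage_eq_inter_range
          have h2 : (Sum.inl ⁻¹' X').ncard = (X' ∩ Set.range Sum.inl).ncard := by
            rw [← h1, Set.ncard_image_of_injective _ Sum.inl_injective]
          have h3 : X' = (X' ∩ Set.range Sum.inl) ∪ (X' ∩ Set.range Sum.inr) := by
            ext x
            cases x with
            | inl x => simp
            | inr x => simp
          have h4 : Disjoint (X' ∩ Set.range Sum.inl) (X' ∩ Set.range Sum.inr) :=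
            Set.isCompl_range_inl_range_inr.disjoint.mono
              Set.inter_subset_right Set.inter_subset_right
          have h5 : X'.ncard = (X' ∩ Set.range Sum.inl).ncard
              + (X' ∩ Set.range Sum.inr).ncard := by
            conv_lhs => rw [h3]
            exact Set.ncard_union_eq h4 (Set.toFinite _) (Set.toFinite _)
          have h6 : X' ∩ Set.range Sum.inr = Set.range Sum.inr :=
            Set.inter_eq_self_of_subset_right hB
          rw [h6, hncr] at h5
          omega
        · rintro i ⟨e⟩
          exact hfree i ⟨e.trans (embInl _ X' (fun v hv => hv))⟩
      · obtain ⟨xb, hxb⟩ := Set.not_subset.mp hB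
        obtain ⟨b, rfl⟩ := hxb.1
        have hbX : Sum.inr b ∉ X' := hxb.2
        by_cases hA : Sum.inl ⁻¹' X' = ∅
        · refine ⟨Sum.inl ⁻¹' X', by simp [hA], ?_⟩
          rintro i ⟨e⟩
          exact hfree i ⟨e.trans (embInl _ X' (fun v hv => hv))⟩
        · obtain ⟨v, hv⟩ := Set.nonempty_iff_ne_empty.mpr hA
          have hvX : Sum.inl v ∈ X' := hv
          set X'' := insert (Sum.inr b) (X' \ {Sum.inl v}) with hX''
          have hmeas : X'' ∩ Set.range Sum.inl
              = (X' ∩ Set.range Sum.inl) \ {Sum.inl v} := by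
            ext x
            simp only [X'', Set.mem_inter_iff, Set.mem_insert_iff, Set.mem_diff,
              Set.mem_singleton_iff, Set.mem_range]
            constructor
            · rintro ⟨h1 | h1, y, rfl⟩
              · exact absurd h1 (by simp)
              · exact ⟨⟨h1.1, ⟨y, rfl⟩⟩, h1.2⟩
            · rintro ⟨⟨h1, y, rfl⟩, h2⟩
              exact ⟨Or.inr ⟨h1, h2⟩, y, rfl⟩
          have hvmem : Sum.inl v ∈ X' ∩ Set.range Sum.inl := ⟨hvX, v, rfl⟩
          have hpos : 0 < (X' ∩ Set.range Sum.inl).ncard :=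
            (Set.ncard_pos (Set.toFinite _)).mpr ⟨_, hvmem⟩
          have hmeas2 : (X'' ∩ Set.range Sum.inl).ncard ≤ n := by
            rw [hmeas, Set.ncard_diff_singleton_of_mem hvmem]
            omega
          have hcard2 : X''.ncard ≤ k + Nat.card (Blocker G) := by
            have h1 : Sum.inr b ∉ X' \ {Sum.inl v} := fun h => hbX h.1
            have h2 : X''.ncard = (X' \ {Sum.inl v}).ncard + 1 :=
              Set.ncard_insert_of_notMem h1
            have h3 : (X' \ {Sum.inl v}).ncard = X'.ncard - 1 :=
              Set.ncard_diff_singleton_of_mem hvX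
            have h4 : 0 < X'.ncard := (Set.ncard_pos (Set.toFinite _)).mpr ⟨_, hvX⟩
            omega
          exact ih X'' hmeas2 hcard2 (swap hKt hdel hbX hvX hfree)
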